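/- Let t0 ≤ tf, let K : ℝ → Matrix (Fin 6) (Fin 3) ℝ and u : ℝ → EuclideanSpace ℝ (Fin 3) be continuous on [t0, tf], let δ = ∫_{t0}^{tf} (K s) *ᵥ (u s) ds, and suppose the matrix W = ∫_{t0}^{tf} (K s) * (K s)ᵀ ds (entrywise interval integral) is invertible. Then ∫_{t0}^{tf} (1/2)‖u s‖² ds ≥ (1/2) ⟪δ, W⁻¹ *ᵥ δ⟫. -/

import Mathlib

open scoped RealInnerProductSpace Matrix

lemma euc_inner_eq {n : ℕ} (x y : EuclideanSpace ℝ (Fin n)) :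
    ⟪x, y⟫ = ∑ i, x i * y i := by
  simp [PiLp.inner_apply, RCLike.inner_apply, conj_trivial]
  exact Finset.sum_congr rfl fun i _ => mul_comm _ _

lemma dot_expand {n : ℕ} (v : Fin n → ℝ) (M : Matrix (Fin n) (Fin n) ℝ) :
    dotProduct v (M *ᵥ v) = ∑ i, ∑ j, v i * v j * M i j := by
  simp only [dotProduct, Matrix.mulVec, Finset.mul_sum]
  exact Finset.sum_congr rfl fun i _ => Finset.sum_congr rfl fun j _ => by ring

/-- Minimum-energy lower bound via the controllability Gramian: any control `u` steering the
linearized system to the deviation `δ = ∫ K(s) u(s) ds` has energy cost at least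
`(1/2)⟪δ, W⁻¹ δ⟫`, where `W = ∫ K(s) K(s)ᵀ ds`. -/
theorem stmt_15 {t0 tf : ℝ} (ht : t0 ≤ tf)
    (K : ℝ → Matrix (Fin 6) (Fin 3) ℝ) (u : ℝ → EuclideanSpace ℝ (Fin 3))
    (hK : ContinuousOn K (Set.Icc t0 tf)) (hu : ContinuousOn u (Set.Icc t0 tf))
    (δ : EuclideanSpace ℝ (Fin 6))
    (hδ : δ = ∫ s in t0..tf, (WithLp.toLp 2 (K s *ᵥ u s) : EuclideanSpace ℝ (Fin 6)))
    (W : Matrix (Fin 6) (Fin 6) ℝ)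
    (hW : W = Matrix.of fun i j => ∫ s in t0..tf, (K s * (K s)ᵀ) i j)
    (hWinv : IsUnit W) :
    (1/2) * ⟪δ, (WithLp.toLp 2 (W⁻¹ *ᵥ δ) : EuclideanSpace ℝ (Fin 6))⟫
      ≤ ∫ s in t0..tf, (1/2) * ‖u s‖ ^ 2 := by
  have huIcc : Set.uIcc t0 tf = Set.Icc t0 tf := Set.uIcc_of_le ht
  set v : EuclideanSpace ℝ (Fin 6) := (WithLp.toLp 2 (W⁻¹ *ᵥ δ) : EuclideanSpace ℝ (Fin 6)) with hv
  have hKij : ∀ i j, ContinuousOn (fun s => K s i j) (Set.Icc t0 tf) := by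
    intro i j
    have h : Continuous (fun M : Matrix (Fin 6) (Fin 3) ℝ => M i j) :=
      (continuous_apply j).comp (continuous_apply i)
    exact h.comp_continuousOn hK
  have huj : ∀ j, ContinuousOn (fun s => u s j) (Set.Icc t0 tf) := fun j =>
    (EuclideanSpace.proj j).continuous.comp_continuousOn hu
  -- component continuity of F := K u
  have hFci : ∀ i, ContinuousOn (fun s => (K s *ᵥ u s) i) (Set.Icc t0 tf) := by
    intro i
    have h : (fun s => (K s *ᵥ u s) i) = fun s => ∑ j, K s i j * u s j := by
      funext s; simp [Matrix.mulVec, dotProduct]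
    rw [h]
    exact continuousOn_finset_sum _ fun j _ => (hKij i j).mul (huj j)
  have hFc : ContinuousOn (fun s => (K s *ᵥ u s : Fin 6 → ℝ)) (Set.Icc t0 tf) :=
    continuousOn_pi.2 hFci
  have hFint : IntervalIntegrable (fun s => (K s *ᵥ u s : Fin 6 → ℝ))
      MeasureTheory.volume t0 tf := by
    apply ContinuousOn.intervalIntegrable
    rw [huIcc]; exact hFc
  have hFiint : ∀ i, IntervalIntegrable (fun s => (K s *ᵥ u s) i)
      MeasureTheory.volume t0 tf := by
    intro i
    apply ContinuousOn.intervalIntegrable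
    rw [huIcc]; exact hFci i
  -- components of δ
  have hδi : ∀ i, δ i = ∫ s in t0..tf, (K s *ᵥ u s) i := by
    intro i
    rw [hδ]
    have hFint' : IntervalIntegrable
        (fun s => (WithLp.toLp 2 (K s *ᵥ u s) : EuclideanSpace ℝ (Fin 6)))
        MeasureTheory.volume t0 tf := by
      apply ContinuousOn.intervalIntegrable
      rw [huIcc]
      exact (PiLp.continuous_toLp (p := 2) (β := fun _ : Fin 6 => ℝ)).comp_continuousOn hFc
    exact ((EuclideanSpace.proj (𝕜 := ℝ) i).intervalIntegral_comp_comm hFint').symm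
  -- Gramian entry continuity
  have hGij : ∀ (i j : Fin 6), ContinuousOn (fun s => (K s * (K s)ᵀ) i j) (Set.Icc t0 tf) := by
    intro i j
    have h : (fun s => (K s * (K s)ᵀ) i j) = fun s => ∑ k, K s i k * K s j k := by
      funext s; simp [Matrix.mul_apply]
    rw [h]
    exact continuousOn_finset_sum _ fun k _ => (hKij i k).mul (hKij j k)
  set Q : ℝ → ℝ := fun s => ∑ i, ∑ j, v i * v j * (K s * (K s)ᵀ) i j with hQ
  have hQc : ContinuousOn Q (Set.Icc t0 tf) :=
    continuousOn_finset_sum _ fun i _ => continuousOn_finset_sum _ fun j _ =>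
      (continuousOn_const.mul (hGij i j))
  have hQint : IntervalIntegrable Q MeasureTheory.volume t0 tf := by
    apply ContinuousOn.intervalIntegrable
    rw [huIcc]; exact hQc
  -- inner term as sum
  have hinner : ∀ s, ⟪v, (WithLp.toLp 2 (K s *ᵥ u s) : EuclideanSpace ℝ (Fin 6))⟫
      = ∑ i, v i * (K s *ᵥ u s) i := fun s => euc_inner_eq _ _
  have hIc : ContinuousOn (fun s => ⟪v, (WithLp.toLp 2 (K s *ᵥ u s) : EuclideanSpace ℝ (Fin 6))⟫)
      (Set.Icc t0 tf) := by
    simp only [hinner]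
    exact continuousOn_finset_sum _ fun i _ => continuousOn_const.mul (hFci i)
  have hIint : IntervalIntegrable (fun s => ⟪v, (WithLp.toLp 2 (K s *ᵥ u s) : EuclideanSpace ℝ (Fin 6))⟫)
      MeasureTheory.volume t0 tf := by
    apply ContinuousOn.intervalIntegrable
    rw [huIcc]; exact hIc
  -- A : ∫ inner = ⟪v, δ⟫
  have hA : (∫ s in t0..tf, ⟪v, (WithLp.toLp 2 (K s *ᵥ u s) : EuclideanSpace ℝ (Fin 6))⟫) = ⟪v, δ⟫ := by
    simp only [hinner]
    rw [intervalIntegral.integral_finset_sum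
      (fun i _ => (hFiint i).const_mul (v i)), euc_inner_eq]
    refine Finset.sum_congr rfl fun i _ => ?_
    rw [intervalIntegral.integral_const_mul, hδi i]
  -- W *ᵥ v = δ
  have hWv : W *ᵥ (v : Fin 6 → ℝ) = (δ : Fin 6 → ℝ) := by
    show W *ᵥ (W⁻¹ *ᵥ (δ : Fin 6 → ℝ)) = (δ : Fin 6 → ℝ)
    rw [Matrix.mulVec_mulVec, Matrix.mul_nonsing_inv _ ((Matrix.isUnit_iff_isUnit_det W).1 hWinv),
      Matrix.one_mulVec]
  -- B : ∫ Q = ⟪v, δ⟫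
  have hB : (∫ s in t0..tf, Q s) = ⟪v, δ⟫ := by
    have h1 : (∫ s in t0..tf, Q s) = ∑ i, ∑ j, v i * v j * W i j := by
      rw [hQ]
      rw [intervalIntegral.integral_finset_sum (fun i _ => by
        apply ContinuousOn.intervalIntegrable
        rw [huIcc]
        exact continuousOn_finset_sum _ fun j _ => continuousOn_const.mul (hGij i j))]
      refine Finset.sum_congr rfl fun i _ => ?_
      rw [intervalIntegral.integral_finset_sum (fun j _ => by
        apply ContinuousOn.intervalIntegrable
        rw [huIcc]
        exact continuousOn_const.mul (hGij i j))]
      refine Finset.sum_congr rfl fun j _ => ?_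
      rw [intervalIntegral.integral_const_mul, hW]
      rfl
    have h2 : ⟪v, δ⟫ = dotProduct (v : Fin 6 → ℝ) (δ : Fin 6 → ℝ) := by
      rw [euc_inner_eq]; rfl
    rw [h1, h2, ← hWv, dot_expand]
  -- pointwise inequality
  have hpt : ∀ s ∈ Set.Icc t0 tf,
      ⟪v, (WithLp.toLp 2 (K s *ᵥ u s) : EuclideanSpace ℝ (Fin 6))⟫ - (1/2) * Q s ≤ (1/2) * ‖u s‖ ^ 2 := by
    intro s _
    set w : EuclideanSpace ℝ (Fin 3) := (WithLp.toLp 2 ((K s)ᵀ *ᵥ v) : EuclideanSpace ℝ (Fin 3)) with hw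
    have h1 : ⟪v, (WithLp.toLp 2 (K s *ᵥ u s) : EuclideanSpace ℝ (Fin 6))⟫ = ⟪w, u s⟫ := by
      rw [euc_inner_eq, euc_inner_eq]
      show dotProduct (v : Fin 6 → ℝ) (K s *ᵥ (u s : Fin 3 → ℝ))
        = dotProduct ((K s)ᵀ *ᵥ (v : Fin 6 → ℝ)) (u s : Fin 3 → ℝ)
      rw [Matrix.dotProduct_mulVec, Matrix.mulVec_transpose]
    have h2 : Q s = ‖w‖ ^ 2 := by
      rw [← real_inner_self_eq_norm_sq, euc_inner_eq]
      have h3 : dotProduct (v : Fin 6 → ℝ) ((K s * (K s)ᵀ) *ᵥ (v : Fin 6 → ℝ))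
          = dotProduct ((K s)ᵀ *ᵥ (v : Fin 6 → ℝ)) ((K s)ᵀ *ᵥ (v : Fin 6 → ℝ)) := by
        rw [← Matrix.mulVec_mulVec, Matrix.dotProduct_mulVec, Matrix.mulVec_transpose]
      have h4 : (∑ i, w i * w i)
          = dotProduct ((K s)ᵀ *ᵥ (v : Fin 6 → ℝ)) ((K s)ᵀ *ᵥ (v : Fin 6 → ℝ)) := rfl
      rw [h4, ← h3, hQ, dot_expand]
    have h4 := norm_sub_sq_real (u s) w
    have h5 := sq_nonneg ‖u s - w‖
    have h6 := real_inner_comm (u s) w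
    rw [h1, h2]
    nlinarith [h4, h5, h6]
  -- integrability of RHS
  have hgint : IntervalIntegrable (fun s => (1/2 : ℝ) * ‖u s‖ ^ 2)
      MeasureTheory.volume t0 tf := by
    apply ContinuousOn.intervalIntegrable
    rw [huIcc]
    exact continuousOn_const.mul ((hu.norm).pow 2)
  have hfint : IntervalIntegrable
      (fun s => ⟪v, (WithLp.toLp 2 (K s *ᵥ u s) : EuclideanSpace ℝ (Fin 6))⟫ - (1/2) * Q s)
      MeasureTheory.volume t0 tf := hIint.sub (hQint.const_mul _)
  have hmono := intervalIntegral.integral_mono_on ht hfint hgint hpt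
  have hsplit : (∫ s in t0..tf,
      (⟪v, (WithLp.toLp 2 (K s *ᵥ u s) : EuclideanSpace ℝ (Fin 6))⟫ - (1/2) * Q s))
      = (1/2) * ⟪v, δ⟫ := by
    rw [intervalIntegral.integral_sub hIint (hQint.const_mul _), hA,
      intervalIntegral.integral_const_mul, hB]
    ring
  rw [hsplit] at hmono
  calc (1/2) * ⟪δ, v⟫ = (1/2) * ⟪v, δ⟫ := by rw [real_inner_comm]
    _ ≤ _ := hmono
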